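/- Let P(n) be a sequence with P(n) = π/n + o(1/n) and for each n let s(n) > 0 satisfy n·P(n)^{s(n)} + (1 − 2P(n))^{s(n)} = 1, with s(n) bounded. Then s(n) → 2 as n → ∞. -/

import Mathlib

open Real Filter

theorem infty_flake_dim (P s : ℕ → ℝ)
    (hP : Tendsto (fun n : ℕ => (n : ℝ) * P n) atTop (nhds π))
    (hs_pos : ∀ n : ℕ, 0 < s n)
    (hmoran : ∀ n : ℕ, (n : ℝ) * P n ^ s n + (1 - 2 * P n) ^ s n = 1)
    (hbdd : ∃ C : ℝ, ∀ n : ℕ, s n ≤ C) :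
    Tendsto s atTop (nhds 2) := by
  obtain ⟨C, hC⟩ := hbdd
  set C' := max C 1 with hC'def
  have hC'1 : (1:ℝ) ≤ C' := le_max_right _ _
  have hsC' : ∀ n, s n ≤ C' := fun n => (hC n).trans (le_max_left _ _)
  have hN : Tendsto (fun n : ℕ => (n : ℝ)) atTop atTop := tendsto_natCast_atTop_atTop
  -- P tends to 0
  have hPto0 : Tendsto P atTop (nhds 0) := by
    have h := hP.mul (tendsto_inv_atTop_zero.comp hN)
    rw [mul_zero] at h
    apply h.congr'
    filter_upwards [eventually_ge_atTop 1] with n hn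
    have hn0 : (n:ℝ) ≠ 0 := by
      have : (1:ℝ) ≤ (n:ℝ) := by exact_mod_cast hn
      linarith
    simp only [Function.comp_apply]
    field_simp
  -- eventual bounds on n * P n
  have hnPlb : ∀ᶠ n : ℕ in atTop, π/2 < (n:ℝ) * P n :=
    hP.eventually (eventually_gt_nhds (half_lt_self pi_pos))
  have hnPub : ∀ᶠ n : ℕ in atTop, (n:ℝ) * P n < 2*π :=
    hP.eventually (eventually_lt_nhds (by nlinarith [pi_pos]))
  have hPpos : ∀ᶠ n in atTop, 0 < P n := by
    filter_upwards [hnPlb, eventually_ge_atTop 1] with n h1 h2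
    have hn1 : (1:ℝ) ≤ (n:ℝ) := by exact_mod_cast h2
    by_contra h
    push_neg at h
    have : (n:ℝ) * P n ≤ 0 := mul_nonpos_of_nonneg_of_nonpos (by linarith) h
    nlinarith [pi_pos]
  have hPsmall : ∀ᶠ n in atTop, P n < 1/4 :=
    hPto0.eventually (eventually_lt_nhds (by norm_num))
  -- key upper bound : n * P^s ≤ 2 C' P
  have key1 : ∀ᶠ n : ℕ in atTop, (n:ℝ) * P n ^ s n ≤ 2 * C' * P n := by
    filter_upwards [hPpos, hPsmall] with n hp hps
    have h2P : 0 < 1 - 2 * P n := by linarith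
    have hB : 1 - 2 * C' * P n ≤ (1 - 2 * P n) ^ s n := by
      rcases le_total (s n) 1 with h | h
      · calc 1 - 2*C'*P n ≤ 1 - 2*P n := by nlinarith
          _ = (1 - 2*P n) ^ (1:ℝ) := (rpow_one _).symm
          _ ≤ (1 - 2*P n) ^ s n := rpow_le_rpow_of_exponent_ge h2P (by linarith) h
      · calc 1 - 2*C'*P n ≤ 1 + s n * (-(2*P n)) := by nlinarith [hsC' n]
          _ ≤ (1 + (-(2*P n))) ^ s n :=
              one_add_mul_self_le_rpow_one_add (by linarith) h
          _ = (1 - 2*P n) ^ s n := by rw [show (1:ℝ) + -(2*P n) = 1 - 2*P n by ring]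
    have := hmoran n
    linarith
  -- split P^s = P^(s-2) * P * P
  have hsplit : ∀ᶠ n in atTop, P n ^ s n = P n ^ (s n - 2) * (P n * P n) := by
    filter_upwards [hPpos] with n hp
    have h2 : P n * P n = P n ^ (2:ℝ) := by
      rw [show (2:ℝ) = ((2:ℕ):ℝ) by norm_num, Real.rpow_natCast]
      ring
    rw [h2, ← Real.rpow_add hp]
    norm_num
  have key2 : ∀ᶠ n in atTop, P n ^ (s n - 2) ≤ 4*C'/π := by
    filter_upwards [key1, hsplit, hnPlb, hPpos] with n h1 h2 h3 hp
    rw [h2] at h1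
    set X := P n ^ (s n - 2) with hX
    have hX0 : 0 < X := Real.rpow_pos_of_pos hp _
    rw [le_div_iff₀ pi_pos]
    nlinarith [pi_pos, mul_pos hX0 hp]
  -- log P n tends to -∞
  have hLbot : Tendsto (fun n => Real.log (P n)) atTop atBot := by
    refine Real.tendsto_log_nhdsGT_zero.comp ?_
    exact tendsto_nhdsWithin_of_tendsto_nhds_of_eventually_within _ hPto0 hPpos
  have hLneg : ∀ᶠ n in atTop, Real.log (P n) < 0 := by
    filter_upwards [hPpos, hPsmall] with n hp hps
    exact Real.log_neg hp (by linarith)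
  have hinvL : Tendsto (fun n => (Real.log (P n))⁻¹) atTop (nhds 0) := by
    have h1 : Tendsto (fun n => (-Real.log (P n))⁻¹) atTop (nhds 0) :=
      tendsto_inv_atTop_zero.comp (tendsto_neg_atBot_atTop.comp hLbot)
    have := h1.neg
    rw [neg_zero] at this
    apply this.congr
    intro n
    simp
  -- lower bound on s - 2
  have hK0 : 0 < 4*C'/π := by positivity
  have lb : ∀ᶠ n in atTop, Real.log (4*C'/π) / Real.log (P n) ≤ s n - 2 := by
    filter_upwards [key2, hLneg, hPpos] with n h1 h2 hp
    rw [div_le_iff_of_neg h2]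
    calc (s n - 2) * Real.log (P n) = Real.log (P n ^ (s n - 2)) :=
          (Real.log_rpow hp _).symm
      _ ≤ Real.log (4*C'/π) :=
          Real.log_le_log (Real.rpow_pos_of_pos hp _) h1
  have hg0 : Tendsto (fun n => Real.log (4*C'/π) / Real.log (P n)) atTop (nhds 0) := by
    have := hinvL.const_mul (Real.log (4*C'/π))
    rw [mul_zero] at this
    exact this.congr fun n => (div_eq_mul_inv _ _).symm
  -- eventually s ≥ 1
  have hs1 : ∀ᶠ n in atTop, 1 ≤ s n := by
    filter_upwards [lb, hg0.eventually (eventually_gt_nhds (by norm_num : (-1:ℝ) < 0))]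
      with n h1 h2
    linarith
  -- key lower bound: n P^s ≥ 2P
  have key3 : ∀ᶠ n : ℕ in atTop, 2 * P n ≤ (n:ℝ) * P n ^ s n := by
    filter_upwards [hPpos, hPsmall, hs1] with n hp hps h1
    have h2P : 0 < 1 - 2 * P n := by linarith
    have : (1 - 2*P n) ^ s n ≤ (1 - 2*P n) ^ (1:ℝ) :=
      rpow_le_rpow_of_exponent_ge h2P (by linarith) h1
    rw [rpow_one] at this
    have := hmoran n
    linarith
  have key4 : ∀ᶠ n in atTop, 1/π ≤ P n ^ (s n - 2) := by
    filter_upwards [key3, hsplit, hnPub, hnPlb, hPpos] with n h1 h2 h3 h4 hp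
    rw [h2] at h1
    set X := P n ^ (s n - 2) with hX
    have hX0 : 0 < X := Real.rpow_pos_of_pos hp _
    rw [div_le_iff₀ pi_pos]
    nlinarith [pi_pos, mul_pos hX0 hp]
  have ub : ∀ᶠ n in atTop, s n - 2 ≤ Real.log (1/π) / Real.log (P n) := by
    filter_upwards [key4, hLneg, hPpos] with n h1 h2 hp
    rw [le_div_iff_of_neg h2]
    calc Real.log (1/π) ≤ Real.log (P n ^ (s n - 2)) :=
          Real.log_le_log (by positivity) h1
      _ = (s n - 2) * Real.log (P n) := Real.log_rpow hp _
  have hh0 : Tendsto (fun n => Real.log (1/π) / Real.log (P n)) atTop (nhds 0) := by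
    have := hinvL.const_mul (Real.log (1/π))
    rw [mul_zero] at this
    exact this.congr fun n => (div_eq_mul_inv _ _).symm
  have hsq : Tendsto (fun n => s n - 2) atTop (nhds 0) :=
    tendsto_of_tendsto_of_tendsto_of_le_of_le' hg0 hh0 lb ub
  have := hsq.add (tendsto_const_nhds (x := (2:ℝ)))
  rw [zero_add] at this
  exact this.congr fun n => by ring
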